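/- The ReLU function σ_r(x) = max(x, 0) is not uniformly approximable by polynomials with integer coefficients on the interval [-1, 1]: there exists ε > 0 such that for every polynomial p with integer coefficients there is some x ∈ [-1, 1] with |max(x, 0) - p(x)| > ε. -/

import Mathlib

lemma even_eval_one_add_eval_neg_one (p : Polynomial ℤ) :
    Even (p.eval 1 + p.eval (-1)) := by
  induction p using Polynomial.induction_on' with
  | add p q hp hq =>
    simp only [Polynomial.eval_add]
    have := hp.add hq
    convert this using 1; rfl; ring
  | monomial n c =>
    simp only [Polynomial.eval_monomial, one_pow, mul_one]
    rcases Nat.even_or_odd n with h | h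
    · rw [h.neg_one_pow, mul_one]
      exact Even.add_self c
    · rw [h.neg_one_pow, mul_neg_one, add_neg_cancel]
      exact Even.zero

/-- The ReLU function `x ↦ max x 0` is not uniformly approximable by polynomials with
integer coefficients on `[-1, 1]`. -/
theorem relu_not_integer_poly_approximable :
    ∃ ε : ℝ, ε > 0 ∧ ∀ p : Polynomial ℤ,
      ∃ x ∈ Set.Icc (-1 : ℝ) 1, |max x 0 - Polynomial.aeval x p| > ε := by
  refine ⟨1/4, by norm_num, fun p => ?_⟩
  by_contra h
  push_neg at h
  have h1 := h 1 (by norm_num)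
  have hm := h (-1) (by norm_num)
  have e1 : (Polynomial.aeval (1:ℝ)) p = ((p.eval 1 : ℤ) : ℝ) := by
    simp [Polynomial.aeval_def, Polynomial.eval₂_at_one]
  have em : (Polynomial.aeval (-1:ℝ)) p = ((p.eval (-1) : ℤ) : ℝ) := by
    have := Polynomial.eval₂_at_intCast (p := p) (Int.castRingHom ℝ) (-1)
    simpa [Polynomial.aeval_def] using this
  rw [e1] at h1
  rw [em] at hm
  obtain ⟨k, hk⟩ := even_eval_one_add_eval_neg_one p
  have hne : (1 - (k + k) : ℤ) ≠ 0 := by omega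
  have hge : (1 : ℝ) ≤ |(1 : ℝ) - ((p.eval 1 : ℤ) + (p.eval (-1) : ℤ))| := by
    have : (1 : ℤ) ≤ |1 - (k + k)| := by rcases abs_cases (1 - (k+k) : ℤ) with ⟨h',_⟩|⟨h',_⟩ <;> omega
    have hcast : ((1 - (k + k) : ℤ) : ℝ) = 1 - ((p.eval 1 : ℤ) + (p.eval (-1) : ℤ)) := by
      push_cast [← hk]; ring
    calc (1:ℝ) ≤ |((1 - (k + k) : ℤ) : ℝ)| := by
          rw [← Int.cast_abs]; exact_mod_cast this
      _ = _ := by rw [hcast]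
  have hmax1 : max (1:ℝ) 0 = 1 := by norm_num
  have hmaxm : max (-1:ℝ) 0 = 0 := by norm_num
  rw [hmax1] at h1
  rw [hmaxm] at hm
  have : |(1 : ℝ) - ((p.eval 1 : ℤ) + (p.eval (-1) : ℤ))| ≤ 1/2 := by
    calc |(1:ℝ) - ((p.eval 1 : ℤ) + (p.eval (-1) : ℤ))|
        = |(1 - (p.eval 1 : ℤ) : ℝ) + (0 - (p.eval (-1) : ℤ) : ℝ)| := by ring_nf
      _ ≤ |(1 - (p.eval 1 : ℤ) : ℝ)| + |(0 - (p.eval (-1) : ℤ) : ℝ)| := abs_add_le _ _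
      _ ≤ 1/4 + 1/4 := add_le_add h1 hm
      _ = 1/2 := by norm_num
  linarith
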